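/- Let p be a positive integer and q a nonzero integer. Then the quotient of G'_{p,q} by the normal closure of the element [x y, y x] (where x and y denote the images of the generators) is isomorphic to the group with presentation < x, y | ((yx)(xy)^{-1})^{pq} y = x^{-1} ((yx)(xy)^{-1})^{pq}, [x y, y x] = 1 >, via a map sending x to x and y to y. In particular, if p' is a positive integer and q' a nonzero integer with p q = p' q', then the quotients of G'_{p,q} and of G'_{p',q'} by the normal closures of their respective elements [x y, y x] are isomorphic. -/

import Mathlib

/-- The relators of the presentation
`< x, y | ((yx)^q (xy)^{-q})^p y = x⁻¹ ((yx)^q (xy)^{-q})^p,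
          ((yx)^{-q} (xy)^q)^p ((yx)^q (xy)^{-q})^p = 1 >`,
where `x` is the generator `0` and `y` is the generator `1`. -/
def gpqRels' (p q : ℤ) : Set (FreeGroup (Fin 2)) :=
  let x : FreeGroup (Fin 2) := FreeGroup.of 0
  let y : FreeGroup (Fin 2) := FreeGroup.of 1
  { ((y * x) ^ q * (x * y) ^ (-q)) ^ p * y *
      (x⁻¹ * ((y * x) ^ q * (x * y) ^ (-q)) ^ p)⁻¹,
    ((y * x) ^ (-q) * (x * y) ^ q) ^ p * ((y * x) ^ q * (x * y) ^ (-q)) ^ p }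

/-- `G'_{p,q}`, a presentation of the fundamental group of the 0-surgery along the
double twist knot `K_{p,q}`. -/
abbrev Gpq' (p q : ℤ) := PresentedGroup (gpqRels' p q)

/-- The commutator `[x y, y x] = (xy)⁻¹ (yx)⁻¹ (xy) (yx)` in `G'_{p,q}`. -/
def commXY (p q : ℤ) : Gpq' p q :=
  let x : Gpq' p q := PresentedGroup.of 0
  let y : Gpq' p q := PresentedGroup.of 1
  (x * y)⁻¹ * (y * x)⁻¹ * (x * y) * (y * x)

/-- The quotient of `G'_{p,q}` by the normal closure of `[x y, y x]`. -/
abbrev GpqQuot (p q : ℤ) := Gpq' p q ⧸ Subgroup.normalClosure {commXY p q}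

/-- The relators of the presentation
`< x, y | ((yx)(xy)⁻¹)^m y = x⁻¹ ((yx)(xy)⁻¹)^m, [x y, y x] = 1 >`,
where `x` is the generator `0` and `y` is the generator `1`. -/
def targetRels (m : ℤ) : Set (FreeGroup (Fin 2)) :=
  let x : FreeGroup (Fin 2) := FreeGroup.of 0
  let y : FreeGroup (Fin 2) := FreeGroup.of 1
  { ((y * x) * (x * y)⁻¹) ^ m * y * (x⁻¹ * ((y * x) * (x * y)⁻¹) ^ m)⁻¹,
    (x * y)⁻¹ * (y * x)⁻¹ * (x * y) * (y * x) }

/-- The group `< x, y | ((yx)(xy)⁻¹)^m y = x⁻¹ ((yx)(xy)⁻¹)^m, [x y, y x] = 1 >`. -/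
abbrev TargetGrp (m : ℤ) := PresentedGroup (targetRels m)

/-- for `p` positive and `q` nonzero, `G'_{p,q} / ⟨⟨[xy,yx]⟩⟩` is
isomorphic to `< x, y | ((yx)(xy)⁻¹)^{pq} y = x⁻¹ ((yx)(xy)⁻¹)^{pq}, [xy,yx] = 1 >`
via `x ↦ x`, `y ↦ y`; in particular for `p'` positive and `q'` nonzero with
`pq = p'q'`, the corresponding quotients of `G'_{p,q}` and `G'_{p',q'}` are
isomorphic. -/
/- ### auxiliary lemmas -/

lemma powA {G : Type*} [Group G] {a b : G} (h : Commute a b) (p q : ℤ) :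
    (b ^ q * a ^ (-q)) ^ p = (b * a⁻¹) ^ (p * q) := by
  have h1 : Commute b a⁻¹ := h.symm.inv_right
  rw [mul_comm p q, zpow_mul, h1.mul_zpow]
  group

lemma powB {G : Type*} [Group G] {a b : G} (h : Commute a b) (p q : ℤ) :
    (b ^ (-q) * a ^ q) ^ p * (b ^ q * a ^ (-q)) ^ p = 1 := by
  have key : b ^ (-q) * a ^ q = (b ^ q * a ^ (-q))⁻¹ := by
    rw [mul_inv_rev, (h.zpow_zpow q (-q)).symm.eq]
    group
  rw [key, inv_zpow, inv_mul_cancel]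

lemma rel_of_commute {G : Type*} [Group G] {a b : G} (h : Commute a b) :
    a⁻¹ * b⁻¹ * a * b = 1 := by
  have := commutatorElement_eq_one_iff_commute.mpr (h.inv_left.inv_right)
  rwa [commutatorElement_def, inv_inv, inv_inv] at this

open scoped commutatorElement in
lemma commute_of_rel {G : Type*} [Group G] {a b : G} (h : a⁻¹ * b⁻¹ * a * b = 1) :
    Commute a b := by
  have h' : ⁅a⁻¹, b⁻¹⁆ = 1 := by rw [commutatorElement_def, inv_inv, inv_inv]; exact h
  simpa using (commutatorElement_eq_one_iff_commute.mp h').inv_left.inv_right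

lemma rel_one {α : Type*} {rels : Set (FreeGroup α)} {r} (hr : r ∈ rels) :
    PresentedGroup.mk rels r = 1 :=
  (QuotientGroup.eq_one_iff r).mpr (Subgroup.subset_normalClosure hr)

/- ### facts in the target group -/

section Target
variable (m : ℤ)

lemma target_comm :
    Commute ((PresentedGroup.of (rels := targetRels m) 0) * PresentedGroup.of 1)
      ((PresentedGroup.of (rels := targetRels m) 1) * PresentedGroup.of 0) := by
  apply commute_of_rel
  have hr : (FreeGroup.of 0 * FreeGroup.of 1)⁻¹ * (FreeGroup.of 1 * FreeGroup.of 0)⁻¹ *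
      (FreeGroup.of 0 * FreeGroup.of 1) * (FreeGroup.of 1 * FreeGroup.of 0) ∈ targetRels m := by
    simp [targetRels]
  have h := rel_one hr
  simp only [map_mul, map_inv] at h
  exact h

lemma target_rel1 :
    (((PresentedGroup.of (rels := targetRels m) 1) * PresentedGroup.of 0) *
        ((PresentedGroup.of (rels := targetRels m) 0) * PresentedGroup.of 1)⁻¹) ^ m *
      PresentedGroup.of 1 *
      ((PresentedGroup.of (rels := targetRels m) 0)⁻¹ *
        (((PresentedGroup.of (rels := targetRels m) 1) * PresentedGroup.of 0) *
          ((PresentedGroup.of (rels := targetRels m) 0) * PresentedGroup.of 1)⁻¹) ^ m)⁻¹ = 1 := by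
  have hr : ((FreeGroup.of 1 * FreeGroup.of 0) * (FreeGroup.of 0 * FreeGroup.of 1)⁻¹) ^ m *
      FreeGroup.of 1 *
      ((FreeGroup.of 0 : FreeGroup (Fin 2))⁻¹ *
        ((FreeGroup.of 1 * FreeGroup.of 0) * (FreeGroup.of 0 * FreeGroup.of 1)⁻¹) ^ m)⁻¹
      ∈ targetRels m := by
    simp [targetRels]
  have h := rel_one hr
  simp only [map_mul, map_inv, map_zpow] at h
  exact h

end Target

/- ### facts in the quotient group -/

section Quot
variable (p q : ℤ)

lemma quot_comm :
    Commute ((QuotientGroup.mk (PresentedGroup.of 0) : GpqQuot p q) * QuotientGroup.mk (PresentedGroup.of 1))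
      ((QuotientGroup.mk (PresentedGroup.of 1) : GpqQuot p q) * QuotientGroup.mk (PresentedGroup.of 0)) := by
  apply commute_of_rel
  have h : (QuotientGroup.mk (commXY p q) : GpqQuot p q) = 1 :=
    (QuotientGroup.eq_one_iff _).mpr
      (Subgroup.subset_normalClosure (Set.mem_singleton _))
  simp only [commXY, QuotientGroup.mk_mul, QuotientGroup.mk_inv] at h
  exact h

lemma quot_rel1 :
    ((QuotientGroup.mk (PresentedGroup.of 1) * QuotientGroup.mk (PresentedGroup.of 0) : GpqQuot p q) ^ q *
        ((QuotientGroup.mk (PresentedGroup.of 0) : GpqQuot p q) * QuotientGroup.mk (PresentedGroup.of 1)) ^ (-q)) ^ p *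
      QuotientGroup.mk (PresentedGroup.of 1) *
      ((QuotientGroup.mk (PresentedGroup.of 0) : GpqQuot p q)⁻¹ *
        ((QuotientGroup.mk (PresentedGroup.of 1) * QuotientGroup.mk (PresentedGroup.of 0) : GpqQuot p q) ^ q *
          ((QuotientGroup.mk (PresentedGroup.of 0) : GpqQuot p q) * QuotientGroup.mk (PresentedGroup.of 1)) ^ (-q)) ^ p)⁻¹ = 1 := by
  have hr : ((FreeGroup.of 1 * FreeGroup.of 0) ^ q * (FreeGroup.of 0 * FreeGroup.of 1) ^ (-q)) ^ p *
      FreeGroup.of 1 *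
      ((FreeGroup.of 0 : FreeGroup (Fin 2))⁻¹ *
        ((FreeGroup.of 1 * FreeGroup.of 0) ^ q * (FreeGroup.of 0 * FreeGroup.of 1) ^ (-q)) ^ p)⁻¹
      ∈ gpqRels' p q := by
    simp [gpqRels']
  have h := congrArg (QuotientGroup.mk' (Subgroup.normalClosure {commXY p q})) (rel_one hr)
  simp only [map_one, map_mul, map_inv, map_zpow] at h
  exact h

end Quot

/- ### the homomorphisms -/

noncomputable section Homs
variable (p q : ℤ)

lemma fwd_rels : ∀ r ∈ gpqRels' p q,
    FreeGroup.lift (fun i => (PresentedGroup.of (rels := targetRels (p * q)) i)) r = 1 := by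
  intro r hr
  set X := (PresentedGroup.of (rels := targetRels (p * q)) 0)
  set Y := (PresentedGroup.of (rels := targetRels (p * q)) 1)
  have hc : Commute (X * Y) (Y * X) := target_comm (p * q)
  simp only [gpqRels', Set.mem_insert_iff, Set.mem_singleton_iff] at hr
  rcases hr with rfl | rfl
  · simp only [map_mul, map_inv, map_zpow, FreeGroup.lift_apply_of]
    rw [powA hc p q]
    exact target_rel1 (p * q)
  · simp only [map_mul, map_inv, map_zpow, FreeGroup.lift_apply_of]
    exact powB hc p q

def fwdHom : Gpq' p q →* TargetGrp (p * q) := PresentedGroup.toGroup (fwd_rels p q)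

lemma fwdHom_comm : fwdHom p q (commXY p q) = 1 := by
  have hc : Commute ((PresentedGroup.of (rels := targetRels (p*q)) 0) * PresentedGroup.of 1)
      ((PresentedGroup.of (rels := targetRels (p*q)) 1) * PresentedGroup.of 0) := target_comm (p * q)
  simp only [commXY, map_mul, map_inv, fwdHom, PresentedGroup.toGroup.of]
  exact rel_of_commute hc

def fwdQuot : GpqQuot p q →* TargetGrp (p * q) :=
  QuotientGroup.lift _ (fwdHom p q)
    (Subgroup.normalClosure_le_normal (by
      intro x hx
      rw [Set.mem_singleton_iff] at hx
      subst hx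
      exact MonoidHom.mem_ker.mpr (fwdHom_comm p q)))

lemma bwd_rels : ∀ r ∈ targetRels (p * q),
    FreeGroup.lift (fun i => (QuotientGroup.mk (PresentedGroup.of i) : GpqQuot p q)) r = 1 := by
  intro r hr
  set X := (QuotientGroup.mk (PresentedGroup.of 0) : GpqQuot p q)
  set Y := (QuotientGroup.mk (PresentedGroup.of 1) : GpqQuot p q)
  have hc : Commute (X * Y) (Y * X) := quot_comm p q
  simp only [targetRels, Set.mem_insert_iff, Set.mem_singleton_iff] at hr
  rcases hr with rfl | rfl
  · simp only [map_mul, map_inv, map_zpow, FreeGroup.lift_apply_of]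
    rw [← powA hc p q]
    exact quot_rel1 p q
  · simp only [map_mul, map_inv, FreeGroup.lift_apply_of]
    exact rel_of_commute hc

def bwdHom : TargetGrp (p * q) →* GpqQuot p q := PresentedGroup.toGroup (bwd_rels p q)

end Homs

noncomputable section Iso
variable (p q : ℤ)

lemma fwdQuot_of (i : Fin 2) :
    fwdQuot p q (QuotientGroup.mk (PresentedGroup.of i)) = PresentedGroup.of i := by
  rw [fwdQuot, QuotientGroup.lift_mk]
  exact PresentedGroup.toGroup.of _

lemma bwdHom_of (i : Fin 2) :
    bwdHom p q (PresentedGroup.of i) = QuotientGroup.mk (PresentedGroup.of i) :=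
  PresentedGroup.toGroup.of _

lemma comp_bwd_fwd : (bwdHom p q).comp (fwdQuot p q) = MonoidHom.id (GpqQuot p q) := by
  apply QuotientGroup.monoidHom_ext
  apply PresentedGroup.ext
  intro i
  show bwdHom p q (fwdQuot p q (QuotientGroup.mk (PresentedGroup.of i))) =
    QuotientGroup.mk (PresentedGroup.of i)
  rw [fwdQuot_of, bwdHom_of]

lemma comp_fwd_bwd : (fwdQuot p q).comp (bwdHom p q) = MonoidHom.id (TargetGrp (p * q)) := by
  apply PresentedGroup.ext
  intro i
  show fwdQuot p q (bwdHom p q (PresentedGroup.of i)) = PresentedGroup.of i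
  rw [bwdHom_of, fwdQuot_of]

def theIso : GpqQuot p q ≃* TargetGrp (p * q) :=
  MonoidHom.toMulEquiv (fwdQuot p q) (bwdHom p q) (comp_bwd_fwd p q) (comp_fwd_bwd p q)

lemma theIso_of (i : Fin 2) :
    theIso p q (QuotientGroup.mk (PresentedGroup.of i)) = PresentedGroup.of i :=
  fwdQuot_of p q i

end Iso

theorem quotient_presentation (p q : ℤ) (hp : 0 < p) (hq : q ≠ 0) :
    (∃ φ : GpqQuot p q ≃* TargetGrp (p * q),
        φ (QuotientGroup.mk (PresentedGroup.of 0)) = PresentedGroup.of 0 ∧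
        φ (QuotientGroup.mk (PresentedGroup.of 1)) = PresentedGroup.of 1) ∧
      ∀ p' q' : ℤ, 0 < p' → q' ≠ 0 → p * q = p' * q' →
        Nonempty (GpqQuot p q ≃* GpqQuot p' q') := by
  refine ⟨⟨theIso p q, theIso_of p q 0, theIso_of p q 1⟩, ?_⟩
  intro p' q' _ _ h
  exact ⟨(theIso p q).trans (by rw [h]; exact (theIso p' q').symm)⟩
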